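/- (Steepest-descent merge selection for utility $U_2$, Section V-A-1) Let $V$ be a finite set, $\mathcal{Q}$ a partition of $V$, $\Phi$ a nonempty set of unordered pairs of distinct blocks of $\mathcal{Q}$, and $\bar{d}$ a function assigning a real number to each nonempty subset of $V$ such that $\bar{d}(A \cup B) \geq \max(\bar{d}(A), \bar{d}(B))$ for any two disjoint nonempty subsets $A, B$. For $(\mathcal{X}_1,\mathcal{X}_2) \in \Phi$, let $\mathcal{Q}_{\{\mathcal{X}_1,\mathcal{X}_2\}} = (\mathcal{Q} \setminus \{\mathcal{X}_1,\mathcal{X}_2\}) \cup \{\mathcal{X}_1 \cup \mathcal{X}_2\}$. Then every minimizer of $\bar{d}(\mathcal{X}_1 \cup \mathcal{X}_2)$ over $\Phi$ is also a minimizer over $\Phi$ of $\max_{\mathcal{X} \in \mathcal{Q}_{\{\mathcal{X}_1,\mathcal{X}_2\}}} \bar{d}(\mathcal{X})$. -/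
import Mathlib


/-- `P` is a partition of `U` (nonempty, pairwise disjoint blocks covering `U`). -/
def IsPartitionOf {α : Type*} (P : Set (Set α)) (U : Set α) : Prop :=
  (∀ A ∈ P, A.Nonempty) ∧ (∀ A ∈ P, ∀ B ∈ P, A ≠ B → Disjoint A B) ∧ ⋃₀ P = U

/-- The partition obtained by merging two blocks. -/
def mergePartition {α : Type*} (Q : Set (Set α)) (A B : Set α) : Set (Set α) :=
  (Q \ {A, B}) ∪ {A ∪ B}

/-- Steepest-descent merge selection for utility `U₂` (Section V-A-1): if the cluster
distortion `d̄` satisfies `d̄(A ∪ B) ≥ max(d̄(A), d̄(B))` for disjoint nonempty `A`, `B`, then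
every minimizer of `d̄(𝒳₁ ∪ 𝒳₂)` over a family `Φ` of pairs of distinct blocks of a partition
`𝒬` of a finite set also minimizes `max_{𝒳 ∈ 𝒬_{𝒳₁,𝒳₂}} d̄(𝒳)` over `Φ`. -/
theorem merge_selection_U2 {V : Type*} [Fintype V]
    (Q : Set (Set V)) (hQ : IsPartitionOf Q (Set.univ : Set V))
    (dbar : Set V → ℝ)
    (hmono : ∀ A B : Set V, A.Nonempty → B.Nonempty → Disjoint A B →
      max (dbar A) (dbar B) ≤ dbar (A ∪ B))
    (Φ : Set (Set V × Set V)) (hΦne : Φ.Nonempty)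
    (hΦ : ∀ p ∈ Φ, p.1 ∈ Q ∧ p.2 ∈ Q ∧ p.1 ≠ p.2)
    (A : Set V × Set V) (hA : A ∈ Φ)
    (hmin : ∀ p ∈ Φ, dbar (A.1 ∪ A.2) ≤ dbar (p.1 ∪ p.2)) :
    ∀ p ∈ Φ,
      sSup (dbar '' mergePartition Q A.1 A.2)
        ≤ sSup (dbar '' mergePartition Q p.1 p.2) := by
  obtain ⟨hne, hdisj, -⟩ := hQ
  intro p hp
  obtain ⟨hp1, hp2, hp12⟩ := hΦ p hp
  have hbdd : BddAbove (dbar '' mergePartition Q p.1 p.2) :=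
    (Set.toFinite _).bddAbove
  have hkey : dbar (p.1 ∪ p.2) ∈ dbar '' mergePartition Q p.1 p.2 :=
    ⟨_, Or.inr rfl, rfl⟩
  have hmain : dbar (p.1 ∪ p.2) ≤ sSup (dbar '' mergePartition Q p.1 p.2) :=
    le_csSup hbdd hkey
  have hS1ne : (dbar '' mergePartition Q A.1 A.2).Nonempty :=
    ⟨dbar (A.1 ∪ A.2), _, Or.inr rfl, rfl⟩
  apply csSup_le hS1ne
  rintro x ⟨X, hX, rfl⟩
  rcases hX with ⟨hXQ, -⟩ | hX
  · by_cases h1 : X = p.1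
    · rw [h1]
      exact le_trans (le_trans (le_max_left _ _)
        (hmono p.1 p.2 (hne _ hp1) (hne _ hp2) (hdisj _ hp1 _ hp2 hp12))) hmain
    · by_cases h2 : X = p.2
      · rw [h2]
        exact le_trans (le_trans (le_max_right _ _)
          (hmono p.1 p.2 (hne _ hp1) (hne _ hp2) (hdisj _ hp1 _ hp2 hp12))) hmain
      · exact le_csSup hbdd ⟨X, Or.inl ⟨hXQ, by simp [h1, h2]⟩, rfl⟩
  · rcases hX with rfl
    exact le_trans (hmin p hp) hmain
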